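/- Define OPT = max over x : S → [0,1], Σ_j x_j ≤ K of min_k c_k Σ_j x_j t_{jk}, and define the performance of the optimal offline randomized algorithm OFF = sup over random subsets A ⊆ S with |A| ≤ K almost surely of min_k c_k E[Σ_{j∈A} t_{jk}]. Then OPT = OFF. -/

import Mathlib

/-- Minimum of a function over `Fin d` (with `0 < d`). -/
noncomputable def finMin {d : ℕ} (hd : 0 < d) (f : Fin d → ℝ) : ℝ :=
  Finset.univ.inf' ⟨⟨0, hd⟩, Finset.mem_univ _⟩ f


/-- Counting lemma: the set of `u : Fin N` such that some translate `u + n*N`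
lands in `[Cj, Cj+a)` has exactly `a` elements, provided `a ≤ N`. -/
lemma count_aux {N : ℕ} (hN : 0 < N) (Cj a : ℕ) (ha : a ≤ N)
    (s : Finset (Fin N))
    (hs : ∀ u : Fin N, u ∈ s ↔ ∃ n : ℕ, Cj ≤ (u : ℕ) + n * N ∧ (u : ℕ) + n * N < Cj + a) :
    s.card = a := by
  rw [← Finset.card_range a]
  symm
  apply Finset.card_bij (fun i _ => (⟨(Cj + i) % N, Nat.mod_lt _ hN⟩ : Fin N))
  · intro i hi
    rw [Finset.mem_range] at hi
    rw [hs]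
    refine ⟨(Cj + i) / N, ?_, ?_⟩ <;>
    · have h := Nat.mod_add_div' (Cj + i) N
      simp only []
      omega
  · intro i₁ hi₁ i₂ hi₂ h
    rw [Finset.mem_range] at hi₁ hi₂
    have h' : (Cj + i₁) % N = (Cj + i₂) % N := congrArg Fin.val h
    have h2 : i₁ % N = i₂ % N := Nat.ModEq.add_left_cancel' Cj h'
    rw [Nat.mod_eq_of_lt (lt_of_lt_of_le hi₁ ha), Nat.mod_eq_of_lt (lt_of_lt_of_le hi₂ ha)] at h2
    exact h2
  · intro u hu
    rw [hs] at hu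
    obtain ⟨n, hn1, hn2⟩ := hu
    refine ⟨(u : ℕ) + n * N - Cj, Finset.mem_range.mpr (by omega), ?_⟩
    apply Fin.ext
    show (Cj + ((u : ℕ) + n * N - Cj)) % N = (u : ℕ)
    have : Cj + ((u : ℕ) + n * N - Cj) = (u : ℕ) + n * N := by omega
    rw [this, Nat.add_mul_mod_self_right, Nat.mod_eq_of_lt u.isLt]

/-- Cardinality bound: at most `K` indices are selected. -/
lemma card_aux {m N K : ℕ} (C : ℕ → ℕ) (hC : Monotone C) (hCm : C m ≤ K * N) (u : Fin N)
    (s : Finset (Fin m))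
    (hs : ∀ j : Fin m, j ∈ s ↔ ∃ n : ℕ,
      C (j : ℕ) ≤ (u : ℕ) + n * N ∧ (u : ℕ) + n * N < C ((j : ℕ) + 1)) :
    s.card ≤ K := by
  classical
  have hN : 0 < N := u.pos
  set P : Fin m → ℕ → Prop := fun j n =>
    C (j : ℕ) ≤ (u : ℕ) + n * N ∧ (u : ℕ) + n * N < C ((j : ℕ) + 1) with hP
  have key : ∀ (jA jB : Fin m) (nA nB : ℕ), P jA nA → P jB nB →
      (u : ℕ) + nA * N = (u : ℕ) + nB * N → (jA : ℕ) < (jB : ℕ) → False := by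
    intro jA jB nA nB hA hB hpt hlt
    have := hC (show (jA : ℕ) + 1 ≤ (jB : ℕ) from hlt)
    have h1 := hA.2
    have h2 := hB.1
    omega
  calc s.card ≤ ((Finset.range K).image (fun n => (u : ℕ) + n * N)).card := by
        apply Finset.card_le_card_of_injOn
          (fun j => if h : ∃ n, P j n then (u : ℕ) + Nat.find h * N else 0)
        · intro j hj
          have h : ∃ n, P j n := (hs j).mp hj
          simp only [dif_pos h]
          have hspec := Nat.find_spec h
          refine Finset.mem_image.mpr ⟨Nat.find h, Finset.mem_range.mpr ?_, rfl⟩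
          have hj1 : C ((j : ℕ) + 1) ≤ C m := hC j.isLt
          have h1 := hspec.2
          by_contra hcon
          push_neg at hcon
          have : K * N ≤ Nat.find h * N := Nat.mul_le_mul_right N hcon
          omega
        · intro j₁ hj₁ j₂ hj₂ heq
          have h₁ : ∃ n, P j₁ n := (hs j₁).mp (by simpa using hj₁)
          have h₂ : ∃ n, P j₂ n := (hs j₂).mp (by simpa using hj₂)
          simp only [dif_pos h₁, dif_pos h₂] at heq
          rcases lt_trichotomy (j₁ : ℕ) (j₂ : ℕ) with h | h | h
          · exact absurd (key j₁ j₂ _ _ (Nat.find_spec h₁) (Nat.find_spec h₂) heq h) (by simp)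
          · exact Fin.ext h
          · exact absurd (key j₂ j₁ _ _ (Nat.find_spec h₂) (Nat.find_spec h₁) heq.symm h) (by simp)
    _ ≤ (Finset.range K).card := Finset.card_image_le
    _ = K := Finset.card_range K

/-- Dependent rounding: given integer "rates" `a j ≤ N` with `∑ a j ≤ K * N`,
there is a random subset of cardinality at most `K` whose marginals are exactly
`a j / N`. -/
lemma round_aux {K m : ℕ} (N : ℕ) (hN : 0 < N) (a : Fin m → ℕ)
    (haN : ∀ j, a j ≤ N) (haK : ∑ j, a j ≤ K * N) :
    ∃ μ : PMF (Finset (Fin m)), (∀ A ∈ μ.support, A.card ≤ K) ∧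
      ∀ f : Fin m → ℝ,
        ∑ A : Finset (Fin m), (μ A).toReal * ∑ j ∈ A, f j
          = (∑ j, (a j : ℝ) * f j) / N := by
  classical
  -- cumulative sums
  set C : ℕ → ℕ := fun q => ∑ i : Fin m, if (i : ℕ) < q then a i else 0 with hCdef
  have hCmono : Monotone C := by
    intro q1 q2 h
    apply Finset.sum_le_sum
    intro i _
    by_cases hi : (i : ℕ) < q1
    · rw [if_pos hi, if_pos (lt_of_lt_of_le hi h)]
    · rw [if_neg hi]; exact Nat.zero_le _
  have hCm : C m = ∑ j, a j := by
    simp [hCdef, Fin.is_lt]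
  have hCstep : ∀ j : Fin m, C ((j : ℕ) + 1) = C (j : ℕ) + a j := by
    intro j
    have hsplit : ∀ i : Fin m, (if (i : ℕ) < (j : ℕ) + 1 then a i else 0)
        = (if (i : ℕ) < (j : ℕ) then a i else 0) + (if i = j then a i else 0) := by
      intro i
      by_cases h1 : (i : ℕ) < (j : ℕ)
      · have h2 : (i : ℕ) < (j : ℕ) + 1 := by omega
        have h3 : i ≠ j := fun e => by rw [e] at h1; exact lt_irrefl _ h1
        simp [h1, h2, h3]
      · by_cases h2 : i = j
        · subst h2; simp [h1, Nat.lt_succ_self]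
        · have h4 : (i : ℕ) ≠ (j : ℕ) := fun e => h2 (Fin.ext e)
          have h3 : ¬ (i : ℕ) < (j : ℕ) + 1 := by omega
          simp [h1, h2, h3]
    show (∑ i : Fin m, if (i : ℕ) < (j : ℕ) + 1 then a i else 0) = _
    rw [Finset.sum_congr rfl (fun i _ => hsplit i), Finset.sum_add_distrib,
      Finset.sum_ite_eq' Finset.univ j a, if_pos (Finset.mem_univ j)]
  -- the selection map
  set P : Fin N → Fin m → Prop := fun u j =>
    ∃ n : ℕ, C (j : ℕ) ≤ (u : ℕ) + n * N ∧ (u : ℕ) + n * N < C ((j : ℕ) + 1) with hPdef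
  set sel : Fin N → Finset (Fin m) := fun u => Finset.univ.filter (P u) with hseldef
  have hselmem : ∀ u j, j ∈ sel u ↔ P u j := by
    intro u j; simp [hseldef]
  have hselcard : ∀ u, (sel u).card ≤ K := by
    intro u
    exact card_aux C hCmono (hCm ▸ haK) u (sel u) (fun j => hselmem u j)
  -- fibers
  set fib : Finset (Fin m) → Finset (Fin N) :=
    fun A => Finset.univ.filter (fun u => sel u = A) with hfibdef
  have hfibsum : ∑ A : Finset (Fin m), (fib A).card = N := by
    have := Finset.card_eq_sum_card_fiberwise
      (f := sel) (s := Finset.univ) (t := Finset.univ) (fun u _ => Finset.mem_univ _)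
    simpa [hfibdef] using this.symm
  have hNR : (N : ℝ) ≠ 0 := Nat.cast_ne_zero.mpr hN.ne'
  have hNE0 : (N : ENNReal) ≠ 0 := Nat.cast_ne_zero.mpr hN.ne'
  have hNEtop : (N : ENNReal) ≠ ⊤ := ENNReal.natCast_ne_top N
  have hsum1 : ∑ A : Finset (Fin m), ((fib A).card : ENNReal) / N = 1 := by
    have hc : ∑ A : Finset (Fin m), ((fib A).card : ENNReal) = (N : ENNReal) := by
      rw [← Nat.cast_sum, hfibsum]
    simp_rw [div_eq_mul_inv]
    rw [← Finset.sum_mul, hc, ← div_eq_mul_inv]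
    exact ENNReal.div_self hNE0 hNEtop
  refine ⟨PMF.ofFintype (fun A => ((fib A).card : ENNReal) / N) hsum1, ?_, ?_⟩
  · intro A hA
    rw [PMF.mem_support_iff, PMF.ofFintype_apply] at hA
    have hcard : (fib A).card ≠ 0 := by
      intro h; apply hA; rw [h]; simp
    obtain ⟨u, hu⟩ := Finset.card_pos.mp (Nat.pos_of_ne_zero hcard)
    have : sel u = A := (Finset.mem_filter.mp hu).2
    rw [← this]; exact hselcard u
  · intro f
    have htoReal : ∀ A, ((PMF.ofFintype (fun A => ((fib A).card : ENNReal) / N) hsum1) A).toReal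
        = ((fib A).card : ℝ) / N := by
      intro A
      rw [PMF.ofFintype_apply, ENNReal.toReal_div]
      simp
    simp only [htoReal]
    -- rewrite each term as a sum over the fiber
    have hterm : ∀ A : Finset (Fin m),
        ((fib A).card : ℝ) / N * ∑ j ∈ A, f j
          = (∑ u ∈ fib A, ∑ j ∈ sel u, f j) / N := by
      intro A
      have hA : ∑ u ∈ fib A, ∑ j ∈ sel u, f j = ((fib A).card : ℝ) * ∑ j ∈ A, f j := by
        rw [Finset.sum_congr rfl (fun u hu => by
          rw [show sel u = A from (Finset.mem_filter.mp hu).2] : ∀ u ∈ fib A,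
            (∑ j ∈ sel u, f j) = ∑ j ∈ A, f j)]
        rw [Finset.sum_const, nsmul_eq_mul]
      rw [hA]
      ring
    rw [Finset.sum_congr rfl (fun A _ => hterm A), ← Finset.sum_div]
    rw [Finset.sum_fiberwise_of_maps_to (fun u _ => Finset.mem_univ _)
      (fun u => ∑ j ∈ sel u, f j)]
    congr 1
    -- ∑ u, ∑ j ∈ sel u, f j = ∑ j, a j * f j
    have hswap : ∑ u : Fin N, ∑ j ∈ sel u, f j
        = ∑ j : Fin m, ∑ u : Fin N, if P u j then f j else 0 := by
      simp_rw [hseldef, Finset.sum_filter]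
      exact Finset.sum_comm
    rw [hswap]
    apply Finset.sum_congr rfl
    intro j _
    have hcount : (Finset.univ.filter (fun u : Fin N => P u j)).card = a j := by
      apply count_aux hN (C (j : ℕ)) (a j) (haN j)
      intro u
      simp only [Finset.mem_filter, Finset.mem_univ, true_and, hPdef, hCstep j]
    rw [← Finset.sum_filter, Finset.sum_const, hcount, nsmul_eq_mul]

lemma finMin_le {d : ℕ} (hd : 0 < d) (f : Fin d → ℝ) (k : Fin d) : finMin hd f ≤ f k :=
  Finset.inf'_le _ (Finset.mem_univ k)

lemma exists_finMin_eq {d : ℕ} (hd : 0 < d) (f : Fin d → ℝ) : ∃ k, finMin hd f = f k := by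
  obtain ⟨i, _, h⟩ := Finset.exists_mem_eq_inf'
    (⟨(⟨0, hd⟩ : Fin d), Finset.mem_univ _⟩ : (Finset.univ : Finset (Fin d)).Nonempty) f
  exact ⟨i, h⟩

/-- Equivalence of the fluid LP optimum and the optimal offline randomized
algorithm: the sup of fluid LP values equals the sup, over random subsets `A`
(laws `μ` on subsets with `|A| ≤ K` a.s.), of `min_k c_k E[φ_k(A)]`. -/
theorem stmt7 (d K m : ℕ) (hd : 0 < d)
    (c : Fin d → ℝ) (hc : ∀ k, 0 < c k)
    (t : Fin m → Fin d → ℝ) (ht : ∀ j k, t j k = 0 ∨ t j k = 1) :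
    sSup {v : ℝ | ∃ x : Fin m → ℝ, (∀ j, 0 ≤ x j ∧ x j ≤ 1) ∧
        (∑ j, x j) ≤ (K : ℝ) ∧
        v = finMin hd (fun k => c k * ∑ j, x j * t j k)}
    = sSup {v : ℝ | ∃ μ : PMF (Finset (Fin m)),
        (∀ A ∈ μ.support, A.card ≤ K) ∧
        v = finMin hd (fun k => c k *
          ∑ A : Finset (Fin m), (μ A).toReal * ∑ j ∈ A, t j k)} := by
  classical
  have ht0 : ∀ j k, 0 ≤ t j k := fun j k => by rcases ht j k with h | h <;> rw [h] <;> norm_num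
  have ht1 : ∀ j k, t j k ≤ 1 := fun j k => by rcases ht j k with h | h <;> rw [h] <;> norm_num
  set k0 : Fin d := ⟨0, hd⟩ with hk0
  set S1 := {v : ℝ | ∃ x : Fin m → ℝ, (∀ j, 0 ≤ x j ∧ x j ≤ 1) ∧
        (∑ j, x j) ≤ (K : ℝ) ∧
        v = finMin hd (fun k => c k * ∑ j, x j * t j k)} with hS1
  set S2 := {v : ℝ | ∃ μ : PMF (Finset (Fin m)),
        (∀ A ∈ μ.support, A.card ≤ K) ∧
        v = finMin hd (fun k => c k *
          ∑ A : Finset (Fin m), (μ A).toReal * ∑ j ∈ A, t j k)} with hS2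
  -- basic facts about PMFs on a fintype
  have hμsum : ∀ μ : PMF (Finset (Fin m)), ∑ A : Finset (Fin m), (μ A).toReal = 1 := by
    intro μ
    rw [← ENNReal.toReal_sum (fun A _ => PMF.apply_ne_top μ A)]
    have h := μ.tsum_coe
    rw [tsum_fintype] at h
    rw [h, ENNReal.toReal_one]
  have hμ0 : ∀ (μ : PMF (Finset (Fin m))) (A : Finset (Fin m)), 0 ≤ (μ A).toReal :=
    fun μ A => ENNReal.toReal_nonneg
  -- expectation bounds
  have hEb : ∀ (μ : PMF (Finset (Fin m))) (k : Fin d),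
      ∑ A : Finset (Fin m), (μ A).toReal * ∑ j ∈ A, t j k ≤ m := by
    intro μ k
    calc ∑ A : Finset (Fin m), (μ A).toReal * ∑ j ∈ A, t j k
        ≤ ∑ A : Finset (Fin m), (μ A).toReal * m := by
          apply Finset.sum_le_sum
          intro A _
          apply mul_le_mul_of_nonneg_left _ (hμ0 μ A)
          calc ∑ j ∈ A, t j k ≤ ∑ j ∈ A, 1 :=
                Finset.sum_le_sum (fun j _ => ht1 j k)
            _ = A.card := by simp
            _ ≤ m := by
                have := Finset.card_le_univ A
                simpa using this
      _ = m := by rw [← Finset.sum_mul, hμsum, one_mul]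
  -- bounded above
  have hbdd1 : BddAbove S1 := by
    refine ⟨c k0 * m, ?_⟩
    rintro v ⟨x, hx, hxK, rfl⟩
    refine le_trans (finMin_le hd _ k0) ?_
    apply mul_le_mul_of_nonneg_left _ (hc k0).le
    calc ∑ j, x j * t j k0 ≤ ∑ j : Fin m, 1 := by
          apply Finset.sum_le_sum
          intro j _
          exact mul_le_one₀ (hx j).2 (ht0 j k0) (ht1 j k0)
      _ = m := by simp
  have hbdd2 : BddAbove S2 := by
    refine ⟨c k0 * m, ?_⟩
    rintro v ⟨μ, hμ, rfl⟩
    exact le_trans (finMin_le hd _ k0) (mul_le_mul_of_nonneg_left (hEb μ k0) (hc k0).le)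
  have hne1 : S1.Nonempty := by
    refine ⟨_, (fun _ => 0), fun j => ⟨le_refl _, zero_le_one⟩, by simp, rfl⟩
  have hne2 : S2.Nonempty := by
    refine ⟨_, PMF.pure ∅, ?_, rfl⟩
    intro A hA
    rw [PMF.support_pure, Set.mem_singleton_iff] at hA
    subst hA; simp
  -- S2 ⊆ S1
  have hsub : S2 ⊆ S1 := by
    rintro v ⟨μ, hμ, rfl⟩
    refine ⟨fun j => ∑ A : Finset (Fin m), (μ A).toReal * (if j ∈ A then 1 else 0),
      ?_, ?_, ?_⟩
    · intro j
      constructor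
      · apply Finset.sum_nonneg
        intro A _
        apply mul_nonneg (hμ0 μ A)
        split <;> norm_num
      · calc ∑ A : Finset (Fin m), (μ A).toReal * (if j ∈ A then 1 else 0)
            ≤ ∑ A : Finset (Fin m), (μ A).toReal * 1 := by
              apply Finset.sum_le_sum
              intro A _
              apply mul_le_mul_of_nonneg_left _ (hμ0 μ A)
              split <;> norm_num
          _ = 1 := by rw [← Finset.sum_mul, hμsum, one_mul]
    · rw [Finset.sum_comm]
      calc ∑ A : Finset (Fin m), ∑ j : Fin m, (μ A).toReal * (if j ∈ A then 1 else 0)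
          = ∑ A : Finset (Fin m), (μ A).toReal * A.card := by
            apply Finset.sum_congr rfl
            intro A _
            rw [← Finset.mul_sum]
            congr 1
            rw [Finset.sum_ite_mem, Finset.univ_inter, Finset.sum_const, nsmul_eq_mul, mul_one]
        _ ≤ ∑ A : Finset (Fin m), (μ A).toReal * K := by
            apply Finset.sum_le_sum
            intro A _
            by_cases hA : μ A = 0
            · simp [hA]
            · apply mul_le_mul_of_nonneg_left _ (hμ0 μ A)
              exact_mod_cast hμ A (PMF.mem_support_iff μ A |>.mpr hA)
        _ = K := by rw [← Finset.sum_mul, hμsum, one_mul]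
    · have hval : ∀ k : Fin d,
          (∑ j, (∑ A : Finset (Fin m), (μ A).toReal * (if j ∈ A then 1 else 0)) * t j k)
            = ∑ A : Finset (Fin m), (μ A).toReal * ∑ j ∈ A, t j k := by
        intro k
        have h1 : (∑ j, (∑ A : Finset (Fin m), (μ A).toReal * (if j ∈ A then 1 else 0)) * t j k)
            = ∑ j : Fin m, ∑ A : Finset (Fin m), (μ A).toReal * (if j ∈ A then t j k else 0) := by
          apply Finset.sum_congr rfl
          intro j _
          rw [Finset.sum_mul]
          apply Finset.sum_congr rfl
          intro A _
          by_cases hj : j ∈ A <;> simp [hj]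
        rw [h1, Finset.sum_comm]
        apply Finset.sum_congr rfl
        intro A _
        rw [← Finset.mul_sum, Finset.sum_ite_mem, Finset.univ_inter]
      congr 1
      funext k
      show c k * (∑ A : Finset (Fin m), (μ A).toReal * ∑ j ∈ A, t j k)
        = c k * ∑ j, (∑ A : Finset (Fin m), (μ A).toReal * (if j ∈ A then 1 else 0)) * t j k
      rw [← hval k]
  apply le_antisymm
  · -- hard direction: LP value ≤ sup over random subsets, via rounding
    apply csSup_le hne1
    rintro v ⟨x, hx, hxK, rfl⟩
    apply le_of_forall_pos_le_add
    intro ε hε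
    have hcmax : ∃ cmax : ℝ, 0 < cmax ∧ ∀ k, c k ≤ cmax :=
      ⟨Finset.univ.sup' ⟨k0, Finset.mem_univ _⟩ c,
        lt_of_lt_of_le (hc k0) (Finset.le_sup' c (Finset.mem_univ k0)),
        fun k => Finset.le_sup' c (Finset.mem_univ k)⟩
    obtain ⟨cmax, hcmax0, hcmaxle⟩ := hcmax
    obtain ⟨N, hNgt⟩ := exists_nat_gt (cmax * m / ε)
    have hNR0 : (0:ℝ) ≤ cmax * m / ε := by positivity
    have hNpos : 0 < N := by
      by_contra h
      push_neg at h
      interval_cases N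
      simp at hNgt
      linarith
    have hNposR : (0:ℝ) < N := Nat.cast_pos.mpr hNpos
    set a : Fin m → ℕ := fun j => ⌊(N:ℝ) * x j⌋₊ with ha
    have hafl : ∀ j, (a j : ℝ) ≤ (N:ℝ) * x j :=
      fun j => Nat.floor_le (by nlinarith [(hx j).1])
    have hafu : ∀ j, (N:ℝ) * x j < (a j : ℝ) + 1 := fun j => Nat.lt_floor_add_one _
    have haN : ∀ j, a j ≤ N := by
      intro j
      have : (a j : ℝ) ≤ (N:ℝ) := le_trans (hafl j) (by nlinarith [(hx j).2])
      exact_mod_cast this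
    have haK : ∑ j, a j ≤ K * N := by
      have h1 : ((∑ j, a j : ℕ) : ℝ) ≤ (K:ℝ) * N := by
        push_cast
        calc ∑ j, (a j : ℝ) ≤ ∑ j, (N:ℝ) * x j := Finset.sum_le_sum (fun j _ => hafl j)
          _ = (N:ℝ) * ∑ j, x j := by rw [Finset.mul_sum]
          _ ≤ (N:ℝ) * K := by nlinarith
          _ = (K:ℝ) * N := by ring
      exact_mod_cast h1
    obtain ⟨μ, hμc, hμE⟩ := round_aux (K := K) N hNpos a haN haK
    have hv' : finMin hd (fun k => c k *
        ∑ A : Finset (Fin m), (μ A).toReal * ∑ j ∈ A, t j k) ∈ S2 := ⟨μ, hμc, rfl⟩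
    obtain ⟨k1, hk1⟩ := exists_finMin_eq hd (fun k => c k *
        ∑ A : Finset (Fin m), (μ A).toReal * ∑ j ∈ A, t j k)
    have hsumb : ∑ j, x j * t j k1
        ≤ (∑ j, (a j : ℝ) * t j k1) / N + m / N := by
      have hjb : ∀ j, x j * t j k1 ≤ (a j : ℝ) * t j k1 / N + 1 / N := by
        intro j
        rw [← add_div, le_div_iff₀ hNposR]
        have h2 : (N:ℝ) * x j * t j k1 ≤ ((a j : ℝ) + 1) * t j k1 :=
          mul_le_mul_of_nonneg_right (hafu j).le (ht0 j k1)
        nlinarith [ht0 j k1, ht1 j k1]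
      calc ∑ j, x j * t j k1 ≤ ∑ j, ((a j : ℝ) * t j k1 / N + 1 / N) :=
            Finset.sum_le_sum (fun j _ => hjb j)
        _ = (∑ j, (a j : ℝ) * t j k1) / N + m / N := by
            rw [Finset.sum_add_distrib, ← Finset.sum_div, Finset.sum_const]
            simp [nsmul_eq_mul]
            ring
    have herr : c k1 * (m / N) ≤ ε := by
      rw [div_lt_iff₀ hε] at hNgt
      have h2 : c k1 * ((m:ℝ) / N) ≤ cmax * ((m:ℝ) / N) :=
        mul_le_mul_of_nonneg_right (hcmaxle k1) (by positivity)
      have h3 : cmax * ((m:ℝ) / N) < ε := by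
        rw [← mul_div_assoc, div_lt_iff₀ hNposR]
        linarith
      linarith
    calc finMin hd (fun k => c k * ∑ j, x j * t j k)
        ≤ c k1 * ∑ j, x j * t j k1 := finMin_le hd _ k1
      _ ≤ c k1 * ((∑ j, (a j : ℝ) * t j k1) / N + m / N) :=
          mul_le_mul_of_nonneg_left hsumb (hc k1).le
      _ = c k1 * ((∑ j, (a j : ℝ) * t j k1) / N) + c k1 * (m / N) := by ring
      _ = c k1 * (∑ A : Finset (Fin m), (μ A).toReal * ∑ j ∈ A, t j k1)
            + c k1 * (m / N) := by rw [hμE (fun j => t j k1)]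
      _ ≤ sSup S2 + ε := by
          apply add_le_add _ herr
          rw [← hk1]
          exact le_csSup hbdd2 hv'
  · exact csSup_le_csSup hbdd1 hne2 hsub
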